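/- For n ≥ 1 and any real numbers a ≥ 0 and b ≥ 0, there exists a constant C depending only on n such that ∫_{ℝⁿ} (1 + (|y| − a)²/(1+b))^{-n} dy ≤ C ((1+b)^{n/2} + (1+b)^{1/2} a^{n-1}). -/

import Mathlib

open MeasureTheory Real

lemma sphere_profile_pointwise (n : ℕ) (hn : 1 ≤ n) (a s r : ℝ) (ha : 0 ≤ a) (hs : 1 ≤ s) :
    |r| ^ (n-1) * (1 + (r - a) ^ 2 / s ^ 2) ^ (-(n:ℝ))
      ≤ (s + a) ^ (n-1) * (1 + ((r - a) / s) ^ 2)⁻¹ := by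
  have hs0 : (0:ℝ) < s := lt_of_lt_of_le one_pos hs
  set t := (r - a) / s with ht
  have hrt : r = a + s * t := by
    have h := (by field_simp : s * ((r - a) / s) = r - a)
    rw [ht]; linarith
  have h1 : (r - a) ^ 2 / s ^ 2 = t ^ 2 := by rw [ht, div_pow]
  have hb : (0:ℝ) < 1 + t ^ 2 := by positivity
  have h2 : (1 + (r - a) ^ 2 / s ^ 2) ^ (-(n:ℝ)) = ((1 + t ^ 2) ^ n)⁻¹ := by
    rw [h1, Real.rpow_neg hb.le, Real.rpow_natCast]
  rw [h2]
  have habs : |r| ≤ (s + a) * (1 + t ^ 2) := by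
    rw [hrt]
    calc |a + s * t| ≤ |a| + |s * t| := abs_add_le _ _
      _ = a + s * |t| := by rw [abs_of_nonneg ha, abs_mul, abs_of_pos hs0]
      _ ≤ a * (1 + t ^ 2) + s * (1 + t ^ 2) := by
          have h3 : |t| ≤ 1 + t ^ 2 := by nlinarith [abs_nonneg t, sq_abs t]
          nlinarith [abs_nonneg t, sq_nonneg t]
      _ = (s + a) * (1 + t ^ 2) := by ring
  have hpow : |r| ^ (n-1) ≤ ((s + a) * (1 + t ^ 2)) ^ (n-1) :=
    pow_le_pow_left₀ (abs_nonneg r) habs _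
  calc |r| ^ (n-1) * ((1 + t ^ 2) ^ n)⁻¹
      ≤ ((s + a) * (1 + t ^ 2)) ^ (n-1) * ((1 + t ^ 2) ^ n)⁻¹ := by gcongr
    _ = (s + a) ^ (n-1) * (1 + t ^ 2)⁻¹ := by
        rw [mul_pow]
        have : (1 + t ^ 2) ^ n = (1 + t ^ 2) ^ (n-1) * (1 + t ^ 2) := by
          rw [← pow_succ, Nat.sub_add_cancel hn]
        rw [this]; field_simp

/-- Integral estimate for a polynomially decaying profile concentrated on the sphere
of radius `a` with spread `√(1+b)`. -/
theorem sphere_profile_integral (n : ℕ) (hn : 1 ≤ n) :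
    ∃ C > 0, ∀ a b : ℝ, 0 ≤ a → 0 ≤ b →
      (∫ y : EuclideanSpace ℝ (Fin n), (1 + (‖y‖ - a) ^ 2 / (1 + b)) ^ (-(n : ℝ)))
        ≤ C * ((1 + b) ^ ((n : ℝ) / 2) + (1 + b) ^ ((1 : ℝ) / 2) * a ^ (n - 1)) := by
  set E := EuclideanSpace ℝ (Fin n)
  have hdim : Module.finrank ℝ E = n := finrank_euclideanSpace_fin
  haveI : Nontrivial E := by
    apply Module.nontrivial_of_finrank_pos (R := ℝ)
    rw [hdim]; exact hn
  set V : ℝ := (volume (Metric.ball (0:E) 1)).toReal with hV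
  have hV0 : 0 < V := by
    apply ENNReal.toReal_pos
    · exact (Metric.measure_ball_pos volume (0:E) one_pos).ne'
    · exact measure_ball_lt_top.ne
  refine ⟨(n * V) * π * 2 ^ n, by positivity, fun a b ha hb => ?_⟩
  set s : ℝ := Real.sqrt (1 + b) with hsdef
  have h1b : (0:ℝ) < 1 + b := by linarith
  have hs1 : 1 ≤ s := by
    nlinarith [Real.sq_sqrt h1b.le, Real.sqrt_nonneg (1+b), hsdef]
  have hs0 : (0:ℝ) < s := lt_of_lt_of_le one_pos hs1
  have hs2 : s ^ 2 = 1 + b := Real.sq_sqrt h1b.le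
  -- the radial profile
  set f : ℝ → ℝ := fun r => (1 + (r - a) ^ 2 / s ^ 2) ^ (-(n:ℝ)) with hf
  have hfpos : ∀ r, 0 < f r := fun r => by
    apply Real.rpow_pos_of_pos; positivity
  -- polar coordinates
  have hpolar : (∫ y : E, (1 + (‖y‖ - a) ^ 2 / (1 + b)) ^ (-(n : ℝ)))
      = (n : ℝ) * V * ∫ r in Set.Ioi (0:ℝ), r ^ (n-1) * f r := by
    have := MeasureTheory.integral_fun_norm_addHaar (volume : Measure E) f
    rw [hdim] at this
    simp only [hf, hs2] at this ⊢
    rw [this, nsmul_eq_mul, smul_eq_mul]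
    simp only [smul_eq_mul]
    rw [hV, ← measureReal_def]
    ring
  rw [hpolar]
  -- the dominating function
  set B : ℝ → ℝ := fun r => (s + a) ^ (n-1) * (1 + ((r - a) / s) ^ 2)⁻¹ with hB
  have hBint : Integrable B := by
    apply Integrable.const_mul
    have h1 : Integrable (fun x : ℝ => (1 + (x * s⁻¹) ^ 2)⁻¹) :=
      integrable_inv_one_add_sq.comp_mul_right' (inv_ne_zero hs0.ne')
    have h2 := h1.comp_sub_right a
    simpa [div_eq_mul_inv] using h2
  have hBval : (∫ r : ℝ, B r) = (s + a) ^ (n-1) * (s * π) := by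
    rw [hB]
    rw [MeasureTheory.integral_const_mul]
    congr 1
    have h1 : (∫ r : ℝ, (1 + ((r - a) / s) ^ 2)⁻¹)
        = ∫ r : ℝ, (fun x : ℝ => (1 + (x * s⁻¹) ^ 2)⁻¹) (r - a) := by
      simp [div_eq_mul_inv]
    rw [h1, integral_sub_right_eq_self (fun x : ℝ => (1 + (x * s⁻¹) ^ 2)⁻¹) a]
    rw [Measure.integral_comp_mul_right (fun x : ℝ => (1 + x ^ 2)⁻¹) s⁻¹]
    rw [integral_univ_inv_one_add_sq, inv_inv, abs_of_pos hs0, smul_eq_mul]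
  -- g : extended integrand
  set g : ℝ → ℝ := fun r => |r| ^ (n-1) * f r with hg
  have hgB : ∀ r, g r ≤ B r := fun r =>
    sphere_profile_pointwise n hn a s r ha hs1
  have hgnn : ∀ r, 0 ≤ g r := fun r => by
    have := (hfpos r).le
    positivity
  have hgcont : Continuous g := by
    apply Continuous.mul (by fun_prop)
    apply Continuous.rpow_const
    · fun_prop
    · intro r; left; positivity
  have hgint : Integrable g := by
    apply Integrable.mono' hBint hgcont.aestronglyMeasurable
    filter_upwards with r
    rw [Real.norm_eq_abs, abs_of_nonneg (hgnn r)]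
    exact hgB r
  have hstep1 : (∫ r in Set.Ioi (0:ℝ), r ^ (n-1) * f r) = ∫ r in Set.Ioi (0:ℝ), g r := by
    apply setIntegral_congr_fun measurableSet_Ioi
    intro r hr
    simp only [hg, abs_of_pos (Set.mem_Ioi.mp hr)]
  have hstep2 : (∫ r in Set.Ioi (0:ℝ), g r) ≤ ∫ r : ℝ, g r :=
    setIntegral_le_integral hgint (Filter.Eventually.of_forall hgnn)
  have hstep3 : (∫ r : ℝ, g r) ≤ (s + a) ^ (n-1) * (s * π) := by
    rw [← hBval]
    exact integral_mono hgint hBint hgB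
  -- final arithmetic
  have hrw1 : (1 + b) ^ ((1:ℝ)/2) = s := by
    rw [hsdef, Real.sqrt_eq_rpow]
  have hrw2 : (1 + b) ^ ((n:ℝ)/2) = s ^ n := by
    rw [hsdef, Real.sqrt_eq_rpow, ← Real.rpow_natCast ((1+b) ^ ((1:ℝ)/(2:ℝ))) n,
      ← Real.rpow_mul h1b.le]
    ring_nf
  rw [hrw1, hrw2]
  have hsn : s ^ (n-1) * s = s ^ n := by
    rw [← pow_succ, Nat.sub_add_cancel hn]
  have hpow2 : (s + a) ^ (n-1) ≤ 2 ^ n * (s ^ (n-1) + a ^ (n-1)) := by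
    calc (s+a)^(n-1) ≤ 2 ^ (n-1-1) * (s^(n-1) + a^(n-1)) := add_pow_le hs0.le ha _
      _ ≤ 2 ^ n * (s^(n-1) + a^(n-1)) := by
          gcongr
          · exact one_le_two
          · omega
  have hInt : (∫ r in Set.Ioi (0:ℝ), r ^ (n-1) * f r) ≤ (s + a) ^ (n-1) * (s * π) := by
    rw [hstep1]; exact hstep2.trans hstep3
  calc (n:ℝ) * V * ∫ r in Set.Ioi (0:ℝ), r ^ (n-1) * f r
      ≤ (n:ℝ) * V * ((s + a) ^ (n-1) * (s * π)) :=
        mul_le_mul_of_nonneg_left hInt (by positivity)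
    _ ≤ (n:ℝ) * V * (2 ^ n * (s ^ (n-1) + a ^ (n-1)) * (s * π)) := by
        have hpi : (0:ℝ) < π := Real.pi_pos
        gcongr
    _ = (n * V) * π * 2 ^ n * (s ^ n + s * a ^ (n-1)) := by
        rw [← hsn]; ring
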